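/- Let R be a commutative ring, A a commutative R-algebra which is faithfully flat as an R-module, and M an R-module. If the base change A ⊗[R] M is a finitely generated projective A-module, then M is a finitely generated projective R-module. -/

import Mathlib

open scoped TensorProduct

lemma finite_descent (R A M : Type*) [CommRing R] [CommRing A] [Algebra R A]
    [Module.FaithfullyFlat R A] [AddCommGroup M] [Module R M]
    [Module.Finite A (A ⊗[R] M)] : Module.Finite R M := by
  classical
  obtain ⟨s, hs⟩ := Module.Finite.fg_top (R := A) (M := A ⊗[R] M)
  choose T hT using fun x : A ⊗[R] M => TensorProduct.exists_finset x
  set t : Finset M := s.biUnion fun x => (T x).image Prod.snd with ht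
  set N : Submodule R M := Submodule.span R (t : Set M) with hN
  have hNtop : N = ⊤ := by
    have : Subsingleton (A ⊗[R] (M ⧸ N)) := by
      set g := N.mkQ.baseChange A with hg
      have hsur : Function.Surjective g := by
        rw [hg, LinearMap.baseChange_eq_ltensor]
        exact LinearMap.lTensor_surjective A (Submodule.mkQ_surjective N)
      have h0 : g = 0 := by
        rw [← LinearMap.ker_eq_top, ← top_le_iff, ← hs, Submodule.span_le]
        intro x hx
        simp only [SetLike.mem_coe, LinearMap.mem_ker]
        rw [hT x]
        rw [map_sum]
        refine Finset.sum_eq_zero fun p hp => ?_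
        have hmt : p.2 ∈ t := Finset.mem_biUnion.2 ⟨x, hx, Finset.mem_image_of_mem Prod.snd hp⟩
        have hm : p.2 ∈ N := Submodule.subset_span (Finset.mem_coe.2 hmt)
        rw [hg, LinearMap.baseChange_tmul]
        rw [show N.mkQ p.2 = 0 from (Submodule.Quotient.mk_eq_zero N).2 hm]
        simp
      refine (subsingleton_iff_forall_eq 0).2 fun y => ?_
      obtain ⟨x, rfl⟩ := hsur y
      rw [h0]; rfl
    have := Module.FaithfullyFlat.lTensor_reflects_triviality R A (M ⧸ N)
    rwa [← Submodule.Quotient.subsingleton_iff]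
  exact ⟨hNtop ▸ Submodule.fg_span (Set.toFinite _)⟩
open TensorProduct.AlgebraTensorModule

lemma distrib_nat (R A : Type*) [CommRing R] [CommRing A] [Algebra R A]
    {N N' M : Type*} [AddCommGroup N] [Module R N] [AddCommGroup N'] [Module R N']
    [AddCommGroup M] [Module R M] (f : N →ₗ[R] N') (x : A ⊗[R] (N ⊗[R] M)) :
    distribBaseChange R A N' M ((f.rTensor M).lTensor A x) =
      (f.baseChange A).rTensor (A ⊗[R] M) (distribBaseChange R A N M x) := by
  induction x using TensorProduct.induction_on with
  | zero => simp
  | add a b ha hb => simp [ha, hb]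
  | tmul a y =>
    induction y using TensorProduct.induction_on with
    | zero => simp
    | add a b ha hb => simp_all [TensorProduct.tmul_add]
    | tmul n m =>
      simp [distribBaseChange, cancelBaseChange, TensorProduct.AlgebraTensorModule.assoc]

set_option synthInstance.maxHeartbeats 400000 in
set_option maxHeartbeats 800000 in
lemma flat_descent (R A M : Type*) [CommRing R] [CommRing A] [Algebra R A]
    [Module.FaithfullyFlat R A] [AddCommGroup M] [Module R M]
    [Module.Flat A (A ⊗[R] M)] : Module.Flat R M := by
  rw [Module.Flat.iff_rTensor_injective']
  intro I
  set f := I.subtype with hf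
  have h1 : Function.Injective ((f.rTensor M).lTensor A) := by
    have hbase : Function.Injective (f.baseChange A) := by
      rw [LinearMap.baseChange_eq_ltensor]
      exact Module.Flat.lTensor_preserves_injective_linearMap f I.injective_subtype
    have h2 : Function.Injective ((f.baseChange A).rTensor (A ⊗[R] M)) :=
      Module.Flat.rTensor_preserves_injective_linearMap _ hbase
    intro x y hxy
    apply (distribBaseChange R A (↥I) M).injective
    apply h2
    rw [← distrib_nat, ← distrib_nat, hxy]
  set K := LinearMap.ker (f.rTensor M) with hK
  have hcomp : (f.rTensor M) ∘ₗ K.subtype = 0 := by ext x; exact x.2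
  have hsub : Function.Injective (K.subtype.lTensor A) :=
    Module.Flat.lTensor_preserves_injective_linearMap _ (Submodule.injective_subtype _)
  have hKsub : Subsingleton (A ⊗[R] ↥K) := by
    refine (subsingleton_iff_forall_eq 0).2 fun y => hsub (h1 ?_)
    rw [← LinearMap.comp_apply, ← LinearMap.lTensor_comp, hcomp]
    simp
  have : Subsingleton ↥K := Module.FaithfullyFlat.lTensor_reflects_triviality R A ↥K
  rw [← LinearMap.ker_eq_bot, ← hK, eq_bot_iff]
  intro x hx
  have : (⟨x, hx⟩ : ↥K) = 0 := Subsingleton.elim _ _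
  simpa using congrArg Subtype.val this

set_option synthInstance.maxHeartbeats 400000 in
set_option maxHeartbeats 800000 in
lemma fp_descent (R A M : Type*) [CommRing R] [CommRing A] [Algebra R A]
    [Module.FaithfullyFlat R A] [AddCommGroup M] [Module R M]
    [Module.FinitePresentation A (A ⊗[R] M)] : Module.FinitePresentation R M := by
  have h1 : Module.Finite R M := finite_descent R A M
  obtain ⟨n, g, hg⟩ := Module.Finite.exists_fin' R M
  set K := LinearMap.ker g with hKdef
  have hexact : Function.Exact K.subtype g := g.exact_subtype_ker_map
  have hexact' : Function.Exact (K.subtype.baseChange A) (g.baseChange A) := by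
    simpa only [LinearMap.baseChange_eq_ltensor] using Module.Flat.lTensor_exact A hexact
  have hsurj : Function.Surjective (g.baseChange A) := by
    rw [LinearMap.baseChange_eq_ltensor]
    exact LinearMap.lTensor_surjective A hg
  have hfg : (LinearMap.ker (g.baseChange A)).FG :=
    Module.FinitePresentation.fg_ker (g.baseChange A) hsurj
  have hinj : Function.Injective (K.subtype.baseChange A) := by
    rw [LinearMap.baseChange_eq_ltensor]
    exact Module.Flat.lTensor_preserves_injective_linearMap _ (Submodule.injective_subtype _)
  have hrange : LinearMap.ker (g.baseChange A) = LinearMap.range (K.subtype.baseChange A) :=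
    LinearMap.exact_iff.mp hexact'
  have : Module.Finite A ↥(LinearMap.range (K.subtype.baseChange A)) :=
    Module.Finite.iff_fg.mpr (hrange ▸ hfg)
  have e : A ⊗[R] ↥K ≃ₗ[A] ↥(LinearMap.range (K.subtype.baseChange A)) :=
    LinearEquiv.ofInjective _ hinj
  have : Module.Finite A (A ⊗[R] ↥K) := Module.Finite.equiv e.symm
  have : Module.Finite R ↥K := finite_descent R A ↥K
  exact Module.finitePresentation_of_free_of_surjective g hg (Module.Finite.iff_fg.mp this)

set_option synthInstance.maxHeartbeats 400000 in
set_option maxHeartbeats 800000 in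
/-- Finitely generated projective modules descend along faithfully flat base change:
if `A` is a faithfully flat commutative `R`-algebra and `A ⊗[R] M` is a finitely generated
projective `A`-module, then `M` is a finitely generated projective `R`-module. -/
theorem finite_projective_descends_faithfully_flat
    (R A M : Type*) [CommRing R] [CommRing A] [Algebra R A] [Module.FaithfullyFlat R A]
    [AddCommGroup M] [Module R M]
    (hfin : Module.Finite A (A ⊗[R] M)) (hproj : Module.Projective A (A ⊗[R] M)) :
    Module.Finite R M ∧ Module.Projective R M := by
  have h1 : Module.Finite R M := finite_descent R A M
  have hfp : Module.FinitePresentation A (A ⊗[R] M) :=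
    Module.finitePresentation_of_projective A (A ⊗[R] M)
  have hflatA : Module.Flat A (A ⊗[R] M) := inferInstance
  have h2 : Module.Flat R M := flat_descent R A M
  have h3 : Module.FinitePresentation R M := fp_descent R A M
  refine ⟨h1, ?_⟩
  apply Module.projective_of_localization_maximal
  intro I hI
  have hfree : Module.Free (Localization.AtPrime I) (LocalizedModule I.primeCompl M) :=
    Module.free_of_flat_of_isLocalRing
  infer_instance
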